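/- For every α ∈ (0,2), the value sin(πα/2)·Γ((α+1)/2)²/Γ(α) is at most Γ((α+1)/2)²/Γ(α), and the latter quantity G(α) := Γ((α+1)/2)²/Γ(α) satisfies G(α) < 1 for all α ∈ (0,1) ∪ (1,2), with G(1) = 1. -/

import Mathlib

open Real Set

lemma strictConvexOn_logGamma : StrictConvexOn ℝ (Ioi (0:ℝ)) (Real.log ∘ Real.Gamma) := by
  have h1 : ConvexOn ℝ (Ioi (0:ℝ)) (fun x => Real.log (Real.Gamma (x + 1))) := by
    have := (Real.convexOn_log_Gamma.translate_left (1:ℝ)).subset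
      (s := Ioi (0:ℝ)) (fun x hx => by simpa using by linarith [mem_Ioi.mp hx]) (convex_Ioi 0)
    exact this
  have h2 : StrictConvexOn ℝ (Ioi (0:ℝ)) (fun x => -Real.log x) := strictConcaveOn_log_Ioi.neg
  have h3 := h1.add_strictConvexOn h2
  refine h3.congr fun x hx => ?_
  have hx0 : (0:ℝ) < x := hx
  simp only [Pi.add_apply, Function.comp_apply,
    Real.Gamma_add_one hx0.ne', Real.log_mul hx0.ne' (Real.Gamma_pos_of_pos hx0).ne']
  ring

theorem stmt_0 :
    (∀ α : ℝ, 0 < α → α < 2 →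
      Real.sin (Real.pi * α / 2) * (Real.Gamma ((α + 1) / 2)) ^ 2 / Real.Gamma α ≤
        (Real.Gamma ((α + 1) / 2)) ^ 2 / Real.Gamma α) ∧
    (∀ α : ℝ, (0 < α ∧ α < 1) ∨ (1 < α ∧ α < 2) →
      (Real.Gamma ((α + 1) / 2)) ^ 2 / Real.Gamma α < 1) ∧
    (Real.Gamma (((1 : ℝ) + 1) / 2)) ^ 2 / Real.Gamma 1 = 1 := by
  refine ⟨?_, ?_, ?_⟩
  · intro α hα0 hα2
    have hG : 0 < Real.Gamma α := Real.Gamma_pos_of_pos hα0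
    have hs := Real.sin_le_one (Real.pi * α / 2)
    have h2 : (0:ℝ) ≤ (Real.Gamma ((α + 1) / 2)) ^ 2 := sq_nonneg _
    have hnum : Real.sin (Real.pi * α / 2) * (Real.Gamma ((α + 1) / 2)) ^ 2 ≤
        (Real.Gamma ((α + 1) / 2)) ^ 2 := by nlinarith
    exact div_le_div_of_nonneg_right hnum hG.le
  · intro α hα
    have hα0 : 0 < α := by rcases hα with ⟨h, _⟩ | ⟨h, _⟩ <;> linarith
    have hne : α ≠ 1 := by rcases hα with ⟨_, h⟩ | ⟨h, _⟩ <;> linarith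
    have hG : 0 < Real.Gamma α := Real.Gamma_pos_of_pos hα0
    have hGm : 0 < Real.Gamma ((α + 1) / 2) := Real.Gamma_pos_of_pos (by linarith)
    have key := strictConvexOn_logGamma.2 (mem_Ioi.mpr hα0) (mem_Ioi.mpr one_pos) hne
      (by norm_num : (0:ℝ) < 1/2) (by norm_num : (0:ℝ) < 1/2) (by norm_num)
    simp only [Function.comp_apply, smul_eq_mul, Real.Gamma_one, Real.log_one] at key
    have hmid : (1/2 : ℝ) * α + (1/2 : ℝ) * 1 = (α + 1) / 2 := by ring
    rw [hmid] at key
    -- key : log (Γ ((α+1)/2)) < 1/2 * log (Γ α) + 1/2 * 0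
    have hlt : Real.log ((Real.Gamma ((α + 1) / 2)) ^ 2) < Real.log (Real.Gamma α) := by
      rw [Real.log_pow]; push_cast; linarith
    have := (Real.log_lt_log_iff (by positivity) hG).mp hlt
    rw [div_lt_one hG]
    exact this
  · norm_num [Real.Gamma_one]
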